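/- Fix n ∈ ℕ and p > 1. The matricially normed space \widehat{M}_n is not p-convex; in particular it is not an L^p-space. That is, there exist k ∈ ℕ and matrices u_1, …, u_k with entries in \widehat{M}_n such that ‖u_1 ⊕ … ⊕ u_k‖ > (Σ_{j=1}^k ‖u_j‖^p)^{1/p}. -/

import Mathlib

open scoped BigOperators
open Matrix

noncomputable section

/-- Block-diagonal sum `u ⊕ w` of two square matrices with entries in `E`. -/
def MatDSum {E : Type*} [Zero E] {m k : ℕ}
    (u : Matrix (Fin m) (Fin m) E) (w : Matrix (Fin k) (Fin k) E) :
    Matrix (Fin (m + k)) (Fin (m + k)) E :=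
  Matrix.reindex finSumFinEquiv finSumFinEquiv (Matrix.fromBlocks u 0 0 w)

/-- Left action `S·u` of a scalar matrix on an `E`-valued matrix. -/
def scalLeft {E : Type*} [AddCommMonoid E] [Module ℂ E] {m : ℕ}
    (S : Matrix (Fin m) (Fin m) ℂ) (u : Matrix (Fin m) (Fin m) E) :
    Matrix (Fin m) (Fin m) E :=
  Matrix.of fun i j => ∑ k, S i k • u k j

/-- Right action `u·S` of a scalar matrix on an `E`-valued matrix. -/
def scalRight {E : Type*} [AddCommMonoid E] [Module ℂ E] {m : ℕ}
    (u : Matrix (Fin m) (Fin m) E) (S : Matrix (Fin m) (Fin m) ℂ) :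
    Matrix (Fin m) (Fin m) E :=
  Matrix.of fun i j => ∑ k, S k j • u i k

/-- The operator norm `‖S‖_o` of a complex scalar matrix, i.e. its norm as an
operator on the euclidean (Hilbert) space `ℂⁿ`. -/
noncomputable def opNorm {m : ℕ} (S : Matrix (Fin m) (Fin m) ℂ) : ℝ :=
  ‖LinearMap.toContinuousLinearMap (Matrix.toEuclideanLin S)‖

/-- The `m`-th amplification of a map `φ : E → F`: apply `φ` entrywise. -/
def matAmpl {E F : Type*} (φ : E → F) {m : ℕ} (u : Matrix (Fin m) (Fin m) E) :
    Matrix (Fin m) (Fin m) F :=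
  Matrix.of fun i j => φ (u i j)

/-- The operator `φ^v : M_n → E`, `(λ_{ij}) ↦ Σ_{i,j} λ_{ji} • x_{ij}`, associated with
`v = (x_{ij}) ∈ M_n(E)`. -/
def matPhi {E : Type*} [AddCommMonoid E] [Module ℂ E] {n : ℕ}
    (v : Matrix (Fin n) (Fin n) E) (a : Matrix (Fin n) (Fin n) ℂ) : E :=
  ∑ i, ∑ j, a j i • v i j

/-- `ν` is a matrix-norm on the complex vector space `E`: each `ν m` is a norm on
`M_m(E)`, and Axioms 1 and 2 of Effros/Ruan hold. -/
def IsMatrixNorm {E : Type} [AddCommGroup E] [Module ℂ E]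
    (ν : ∀ m : ℕ, Matrix (Fin m) (Fin m) E → ℝ) : Prop :=
  (∀ (m : ℕ) (u v : Matrix (Fin m) (Fin m) E), ν m (u + v) ≤ ν m u + ν m v) ∧
  (∀ (m : ℕ) (c : ℂ) (u : Matrix (Fin m) (Fin m) E), ν m (c • u) = ‖c‖ * ν m u) ∧
  (∀ (m : ℕ) (u : Matrix (Fin m) (Fin m) E), ν m u = 0 ↔ u = 0) ∧
  (∀ (m k : ℕ) (u : Matrix (Fin m) (Fin m) E),
      ν (m + k) (MatDSum u (0 : Matrix (Fin k) (Fin k) E)) = ν m u) ∧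
  (∀ (m : ℕ) (S : Matrix (Fin m) (Fin m) ℂ) (u : Matrix (Fin m) (Fin m) E),
      ν m (scalLeft S u) ≤ opNorm S * ν m u) ∧
  (∀ (m : ℕ) (u : Matrix (Fin m) (Fin m) E) (S : Matrix (Fin m) (Fin m) ℂ),
      ν m (scalRight u S) ≤ ν m u * opNorm S)

/-- The set of values `‖(φ^v)_m(u)‖_m` over all proper couples `(E, v)`, i.e. over all
matricially normed spaces `E` and all `v` in the closed unit ball of `M_n(E)`. -/
def hatNormSet (n : ℕ) {m : ℕ}
    (u : Matrix (Fin m) (Fin m) (Matrix (Fin n) (Fin n) ℂ)) : Set ℝ :=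
  { r | ∃ (E : Type) (_ : AddCommGroup E) (_ : Module ℂ E)
        (ν : ∀ m' : ℕ, Matrix (Fin m') (Fin m') E → ℝ),
        IsMatrixNorm ν ∧
        ∃ v : Matrix (Fin n) (Fin n) E, ν n v ≤ 1 ∧ r = ν m (matAmpl (matPhi v) u) }

/-- The matrix-norm of the matricially normed space `M̂_n`:
`‖u‖_m = sup { ‖(φ^v)_m(u)‖_m : (E, v) a proper couple }`. -/
noncomputable def hatNorm (n : ℕ) {m : ℕ}
    (u : Matrix (Fin m) (Fin m) (Matrix (Fin n) (Fin n) ℂ)) : ℝ :=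
  sSup (hatNormSet n u)

/-- The iterated block-diagonal sum `u 0 ⊕ u 1 ⊕ … ⊕ u (k-1)` of a family of square
matrices with entries in `E` (of possibly different sizes). -/
def dSumFam {E : Type*} [Zero E] :
    ∀ (k : ℕ) (d : Fin k → ℕ),
      (∀ j, Matrix (Fin (d j)) (Fin (d j)) E) →
      Matrix (Fin (∑ j, d j)) (Fin (∑ j, d j)) E
  | 0, _, _ => 0
  | (k + 1), d, u =>
      Matrix.reindex (finCongr (Fin.sum_univ_succ d).symm)
        (finCongr (Fin.sum_univ_succ d).symm)
        (MatDSum (u 0) (dSumFam k (fun j => d j.succ) (fun j => u j.succ)))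

lemma eucl_coord_le {ι : Type*} [Fintype ι] (y : EuclideanSpace ℂ ι) (i : ι) : ‖y i‖ ≤ ‖y‖ := by
  rw [EuclideanSpace.norm_eq, show ‖y i‖ = Real.sqrt (‖y i‖^2) from (Real.sqrt_sq (norm_nonneg _)).symm]
  exact Real.sqrt_le_sqrt (Finset.single_le_sum (f := fun k => ‖y k‖^2) (fun _ _ => sq_nonneg _) (Finset.mem_univ i))

open scoped Matrix.Norms.L2Operator in
lemma opNorm_eq_norm {m : ℕ} (S : Matrix (Fin m) (Fin m) ℂ) : opNorm S = ‖S‖ := rfl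

open scoped Matrix.Norms.L2Operator in
lemma opNorm_one_le {m : ℕ} : opNorm (1 : Matrix (Fin m) (Fin m) ℂ) ≤ 1 := by
  rw [opNorm_eq_norm, Matrix.cstar_norm_def, _root_.map_one]
  exact ContinuousLinearMap.norm_id_le

open scoped Matrix.Norms.L2Operator in
lemma entry_le_opNorm {m : ℕ} (A : Matrix (Fin m) (Fin m) ℂ) (i j : Fin m) :
    ‖A i j‖ ≤ opNorm A := by
  rw [opNorm_eq_norm]
  have h := Matrix.l2_opNorm_mulVec A (EuclideanSpace.single j 1)
  rw [EuclideanSpace.norm_single] at h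
  simp only [norm_one, mul_one] at h
  refine le_trans ?_ h
  have hx : ((EuclideanSpace.equiv (Fin m) ℂ).symm <| A *ᵥ (EuclideanSpace.single j 1) : EuclideanSpace ℂ (Fin m)) i = A i j := by
    show (A *ᵥ (EuclideanSpace.single j 1) : Fin m → ℂ) i = A i j
    have h2 : ∀ x : Fin m → ℂ, x = Pi.single j 1 → (A *ᵥ x) i = A i j := by
      rintro x rfl; simp [Matrix.mulVec_single]
    exact h2 _ (by ext k; simp [EuclideanSpace.single_apply, Pi.single_apply])
  rw [← hx]
  exact eucl_coord_le _ i

open scoped Matrix.Norms.L2Operator in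
lemma opNorm_nonneg {m : ℕ} (S : Matrix (Fin m) (Fin m) ℂ) : 0 ≤ opNorm S := by
  rw [opNorm_eq_norm]; exact norm_nonneg _

open scoped Matrix.Norms.L2Operator in
lemma opNorm_mul_le {m : ℕ} (S T : Matrix (Fin m) (Fin m) ℂ) :
    opNorm (S * T) ≤ opNorm S * opNorm T := by
  simp only [opNorm_eq_norm]; exact Matrix.l2_opNorm_mul S T

open scoped Matrix.Norms.L2Operator in
lemma opNorm_smul {m : ℕ} (c : ℂ) (S : Matrix (Fin m) (Fin m) ℂ) :
    opNorm (c • S) = ‖c‖ * opNorm S := by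
  simp only [opNorm_eq_norm]; exact norm_smul c S

open scoped Matrix.Norms.L2Operator in
lemma opNorm_zero {m : ℕ} : opNorm (0 : Matrix (Fin m) (Fin m) ℂ) = 0 := by
  rw [opNorm_eq_norm]; exact norm_zero

open scoped Matrix.Norms.L2Operator in
lemma opNorm_eq_zero {m : ℕ} {S : Matrix (Fin m) (Fin m) ℂ} (h : opNorm S = 0) : S = 0 := by
  rw [opNorm_eq_norm] at h; exact norm_eq_zero.mp h

open scoped Matrix.Norms.L2Operator in
lemma opNorm_compress {m k : ℕ} (A : Matrix (Fin (m+k)) (Fin (m+k)) ℂ) :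
    opNorm (Matrix.of fun a b : Fin m => A (Fin.castAdd k a) (Fin.castAdd k b)) ≤ opNorm A := by
  set B : Matrix (Fin m) (Fin m) ℂ := Matrix.of fun a b : Fin m => A (Fin.castAdd k a) (Fin.castAdd k b) with hB
  unfold opNorm
  apply ContinuousLinearMap.opNorm_le_bound _ (opNorm_nonneg A)
  intro x
  set ex : Fin m → ℂ := WithLp.equiv 2 _ x with hex
  set xt : EuclideanSpace ℂ (Fin (m+k)) :=
    (WithLp.equiv 2 _).symm (fun i => Fin.addCases (motive := fun _ => ℂ) (fun a => ex a) (fun _ => 0) i) with hxt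
  have hxtnorm : ‖xt‖ = ‖x‖ := by
    rw [EuclideanSpace.norm_eq, EuclideanSpace.norm_eq]
    congr 1
    rw [Fin.sum_univ_add]
    simp [hxt, WithLp.equiv_symm_apply, PiLp.toLp_apply, hex]
  have hcoord : ∀ a : Fin m, (Matrix.toEuclideanLin B x) a = (Matrix.toEuclideanLin A xt) (Fin.castAdd k a) := by
    intro a
    simp only [Matrix.toEuclideanLin_apply, WithLp.equiv_symm_apply, PiLp.toLp_apply, Matrix.mulVec, dotProduct]
    rw [Fin.sum_univ_add]
    simp [hxt, hB, WithLp.equiv_symm_apply, PiLp.toLp_apply]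
    rfl
  have h1 : ‖Matrix.toEuclideanLin B x‖ ≤ ‖Matrix.toEuclideanLin A xt‖ := by
    rw [EuclideanSpace.norm_eq, EuclideanSpace.norm_eq]
    apply Real.sqrt_le_sqrt
    rw [Fin.sum_univ_add]
    have : ∑ a : Fin m, ‖(Matrix.toEuclideanLin B x) a‖^2
        = ∑ a : Fin m, ‖(Matrix.toEuclideanLin A xt) (Fin.castAdd k a)‖^2 := by
      apply Finset.sum_congr rfl; intro a _; rw [hcoord a]
    rw [this]
    have : (0:ℝ) ≤ ∑ b : Fin k, ‖(Matrix.toEuclideanLin A xt) (Fin.natAdd m b)‖^2 :=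
      Finset.sum_nonneg fun _ _ => sq_nonneg _
    linarith
  calc ‖(LinearMap.toContinuousLinearMap (Matrix.toEuclideanLin B)) x‖
      = ‖Matrix.toEuclideanLin B x‖ := rfl
    _ ≤ ‖Matrix.toEuclideanLin A xt‖ := h1
    _ = ‖(LinearMap.toContinuousLinearMap (Matrix.toEuclideanLin A)) xt‖ := rfl
    _ ≤ ‖LinearMap.toContinuousLinearMap (Matrix.toEuclideanLin A)‖ * ‖xt‖ :=
        ContinuousLinearMap.le_opNorm _ _
    _ = opNorm A * ‖x‖ := by rw [hxtnorm]; rfl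

open scoped Matrix.Norms.L2Operator in
lemma opNorm_extend {m k : ℕ} (B : Matrix (Fin m) (Fin m) ℂ) :
    opNorm (Matrix.reindex finSumFinEquiv finSumFinEquiv
      (Matrix.fromBlocks B 0 0 (0 : Matrix (Fin k) (Fin k) ℂ))) ≤ opNorm B := by
  set At : Matrix (Fin (m+k)) (Fin (m+k)) ℂ := Matrix.reindex finSumFinEquiv finSumFinEquiv
      (Matrix.fromBlocks B 0 0 (0 : Matrix (Fin k) (Fin k) ℂ)) with hAt
  unfold opNorm
  apply ContinuousLinearMap.opNorm_le_bound _ (opNorm_nonneg B)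
  intro x
  set y : EuclideanSpace ℂ (Fin m) :=
    (WithLp.equiv 2 _).symm (fun b => (WithLp.equiv 2 _ x) (Fin.castAdd k b)) with hy
  have hynorm : ‖y‖ ≤ ‖x‖ := by
    rw [EuclideanSpace.norm_eq, EuclideanSpace.norm_eq]
    apply Real.sqrt_le_sqrt
    rw [Fin.sum_univ_add (f := fun i => ‖x i‖^2)]
    have h0 : ∑ b : Fin m, ‖y b‖^2 = ∑ b : Fin m, ‖x (Fin.castAdd k b)‖^2 := by
      apply Finset.sum_congr rfl; intro b _; rfl
    have : (0:ℝ) ≤ ∑ c : Fin k, ‖x (Fin.natAdd m c)‖^2 :=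
      Finset.sum_nonneg fun _ _ => sq_nonneg _
    rw [h0]; linarith
  have hcoordL : ∀ a : Fin m,
      (Matrix.toEuclideanLin At x) (Fin.castAdd k a) = (Matrix.toEuclideanLin B y) a := by
    intro a
    simp only [Matrix.toEuclideanLin_apply, WithLp.equiv_symm_apply, PiLp.toLp_apply, Matrix.mulVec, dotProduct]
    rw [Fin.sum_univ_add]
    simp [hAt, Matrix.fromBlocks]
    rfl
  have hcoordR : ∀ c : Fin k, (Matrix.toEuclideanLin At x) (Fin.natAdd m c) = 0 := by
    intro c
    simp only [Matrix.toEuclideanLin_apply, WithLp.equiv_symm_apply, PiLp.toLp_apply, Matrix.mulVec, dotProduct]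
    rw [Fin.sum_univ_add]
    simp [hAt, Matrix.fromBlocks]
  have h1 : ‖Matrix.toEuclideanLin At x‖ = ‖Matrix.toEuclideanLin B y‖ := by
    rw [EuclideanSpace.norm_eq, EuclideanSpace.norm_eq]
    congr 1
    rw [Fin.sum_univ_add]
    simp only [hcoordR, norm_zero]
    simp [hcoordL]
  calc ‖(LinearMap.toContinuousLinearMap (Matrix.toEuclideanLin At)) x‖
      = ‖Matrix.toEuclideanLin B y‖ := h1
    _ = ‖(LinearMap.toContinuousLinearMap (Matrix.toEuclideanLin B)) y‖ := rfl
    _ ≤ ‖LinearMap.toContinuousLinearMap (Matrix.toEuclideanLin B)‖ * ‖y‖ :=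
        ContinuousLinearMap.le_opNorm _ _
    _ ≤ opNorm B * ‖x‖ := by
        apply mul_le_mul_of_nonneg_left hynorm (norm_nonneg _)

lemma opNorm_std_le {m : ℕ} (a b : Fin m) :
    opNorm (Matrix.single a b (1:ℂ)) ≤ 1 := by
  unfold opNorm
  apply ContinuousLinearMap.opNorm_le_bound _ zero_le_one
  intro x
  have hcoord : ∀ i, (Matrix.toEuclideanLin (Matrix.single a b (1:ℂ)) x) i
      = if i = a then x b else 0 := by
    intro i
    simp only [Matrix.toEuclideanLin_apply, WithLp.equiv_symm_apply, PiLp.toLp_apply, Matrix.mulVec,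
      dotProduct, Matrix.single, Matrix.of_apply]
    have step : ∀ k : Fin m, (if a = i ∧ b = k then (1:ℂ) else 0) * x.ofLp k
        = if k = b then (if i = a then x b else 0) else 0 := by
      intro k
      simp only [@eq_comm _ a i, @eq_comm _ b k]
      by_cases h1 : i = a <;> by_cases h2 : k = b <;> simp [h1, h2] <;> rfl
    rw [Finset.sum_congr rfl (fun k _ => step k)]
    simp
  have key : ‖(LinearMap.toContinuousLinearMap (Matrix.toEuclideanLin (Matrix.single a b (1:ℂ)))) x‖ = ‖x b‖ := by
    show ‖Matrix.toEuclideanLin (Matrix.single a b (1:ℂ)) x‖ = ‖x b‖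
    rw [EuclideanSpace.norm_eq]
    have step : ∀ i : Fin m, ‖(Matrix.toEuclideanLin (Matrix.single a b (1:ℂ)) x) i‖^2
        = if i = a then ‖x b‖^2 else 0 := by
      intro i; rw [hcoord i]; by_cases h : i = a <;> simp [h]
    rw [Finset.sum_congr rfl (fun i _ => step i)]
    rw [Finset.sum_ite_eq' Finset.univ a (fun _ => ‖x b‖^2)]
    simp [Real.sqrt_sq (norm_nonneg _)]
  rw [key, one_mul]
  exact eucl_coord_le x b

section GeneralNu
variable {E : Type} [AddCommGroup E] [Module ℂ E]
  {ν : ∀ m : ℕ, Matrix (Fin m) (Fin m) E → ℝ} (hν : IsMatrixNorm ν)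

include hν

lemma nu_zero (m : ℕ) : ν m 0 = 0 := (hν.2.2.1 m 0).mpr rfl

lemma nu_nonneg (m : ℕ) (u : Matrix (Fin m) (Fin m) E) : 0 ≤ ν m u := by
  have h1 := hν.1 m u ((-1 : ℂ) • u)
  have h2 : ν m ((-1 : ℂ) • u) = ν m u := by rw [hν.2.1 m (-1) u]; simp
  have h3 : u + (-1 : ℂ) • u = 0 := by simp
  rw [h3, nu_zero hν, h2] at h1
  linarith

lemma nu_sum_le {ι : Type*} (m : ℕ) (s : Finset ι) (f : ι → Matrix (Fin m) (Fin m) E) :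
    ν m (∑ i ∈ s, f i) ≤ ∑ i ∈ s, ν m (f i) := by
  classical
  induction s using Finset.induction with
  | empty => simp [nu_zero hν]
  | insert _ _ hx ih =>
    rw [Finset.sum_insert hx, Finset.sum_insert hx]
    exact le_trans (hν.1 m _ _) (by linarith)

omit hν

lemma scalLeft_std {m : ℕ} (a b : Fin m) (M : Matrix (Fin m) (Fin m) E) :
    scalLeft (Matrix.single a b 1) M = Matrix.of fun i j => if i = a then M b j else 0 := by
  ext i j
  show (∑ k, Matrix.single a b (1:ℂ) i k • M k j) = _
  have step : ∀ k : Fin m, Matrix.single a b (1:ℂ) i k • M k j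
      = if k = b then (if i = a then M b j else 0) else 0 := by
    intro k
    simp only [Matrix.single, Matrix.of_apply, @eq_comm _ a i, @eq_comm _ b k]
    by_cases h1 : i = a <;> by_cases h2 : k = b <;> simp [h1, h2]
  rw [Finset.sum_congr rfl (fun k _ => step k)]
  simp

lemma scalRight_std {m : ℕ} (a b : Fin m) (M : Matrix (Fin m) (Fin m) E) :
    scalRight M (Matrix.single a b 1) = Matrix.of fun i j => if j = b then M i a else 0 := by
  ext i j
  show (∑ k, Matrix.single a b (1:ℂ) k j • M i k) = _
  have step : ∀ k : Fin m, Matrix.single a b (1:ℂ) k j • M i k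
      = if k = a then (if j = b then M i a else 0) else 0 := by
    intro k
    simp only [Matrix.single, Matrix.of_apply, @eq_comm _ a k, @eq_comm _ b j]
    by_cases h1 : j = b <;> by_cases h2 : k = a <;> simp [h1, h2]
  rw [Finset.sum_congr rfl (fun k _ => step k)]
  simp

include hν

lemma nu_std_le {m : ℕ} (s t s' t' : Fin m) (x : E) :
    ν m (Matrix.single s' t' x) ≤ ν m (Matrix.single s t x) := by
  have h1 : scalRight (Matrix.single s t x) (Matrix.single t t' 1)
      = Matrix.single s t' x := by
    rw [scalRight_std]
    ext i j
    simp only [Matrix.of_apply, Matrix.single, @eq_comm _ t' j]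
    by_cases h1 : j = t' <;> by_cases h2 : s = i <;> simp [h1, h2]
  have h2 : scalLeft (Matrix.single s' s 1) (Matrix.single s t' x)
      = Matrix.single s' t' x := by
    rw [scalLeft_std]
    ext i j
    simp only [Matrix.of_apply, Matrix.single, @eq_comm _ s' i]
    by_cases h1 : i = s' <;> by_cases h2 : t' = j <;> simp [h1, h2]
  calc ν m (Matrix.single s' t' x)
      = ν m (scalLeft (Matrix.single s' s 1) (scalRight (Matrix.single s t x) (Matrix.single t t' 1))) := by rw [h1, h2]
    _ ≤ opNorm (Matrix.single s' s 1) * ν m (scalRight (Matrix.single s t x) (Matrix.single t t' 1)) := hν.2.2.2.2.1 m _ _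
    _ ≤ 1 * ν m (scalRight (Matrix.single s t x) (Matrix.single t t' 1)) := by
        apply mul_le_mul_of_nonneg_right (opNorm_std_le _ _)
        calc (0:ℝ) ≤ ν m (Matrix.single s t x) * 0 := by simp
          _ ≤ _ := by
              have := hν.2.2.2.2.2 m (Matrix.single s t x) (Matrix.single t t' 1)
              have hn := nu_nonneg hν m (scalRight (Matrix.single s t x) (Matrix.single t t' 1))
              linarith
    _ = ν m (scalRight (Matrix.single s t x) (Matrix.single t t' 1)) := one_mul _
    _ ≤ ν m (Matrix.single s t x) * opNorm (Matrix.single t t' 1) := hν.2.2.2.2.2 m _ _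
    _ ≤ ν m (Matrix.single s t x) * 1 := by
        apply mul_le_mul_of_nonneg_left (opNorm_std_le _ _) (nu_nonneg hν m _)
    _ = ν m (Matrix.single s t x) := mul_one _

omit hν in
lemma nu_cast {m m' : ℕ} (h : m = m') (u : Matrix (Fin m) (Fin m) E) :
    ν m' (Matrix.reindex (finCongr h) (finCongr h) u) = ν m u := by
  subst h
  simp

end GeneralNu

lemma finSumFin_symm_one {m' : ℕ} (z : Fin (1 + m')) :
    finSumFinEquiv.symm z = if h : (z : ℕ) = 0 then Sum.inl 0
      else Sum.inr ⟨(z:ℕ)-1, by omega⟩ := by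
  induction z using Fin.addCases with
  | left a =>
    rw [finSumFinEquiv_symm_apply_castAdd]
    have ha : (a : ℕ) = 0 := by omega
    have hc : ((Fin.castAdd m' a : Fin (1+m')) : ℕ) = 0 := by
      simp [Fin.coe_castAdd, ha]
    rw [dif_pos hc]
    congr
    exact Fin.ext ha
  | right b =>
    rw [finSumFinEquiv_symm_apply_natAdd]
    have hc : ((Fin.natAdd 1 b : Fin (1+m')) : ℕ) = 1 + (b:ℕ) := rfl
    rw [dif_neg (by omega)]
    congr 1
    exact Fin.ext (by simp [hc])

section GeneralNu2
variable {E : Type} [AddCommGroup E] [Module ℂ E]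
  {ν : ∀ m : ℕ, Matrix (Fin m) (Fin m) E → ℝ} (hν : IsMatrixNorm ν)

include hν

lemma nu_std00 (m' : ℕ) (x : E) :
    ν (m'+1) (Matrix.single (0 : Fin (m'+1)) 0 x)
      = ν 1 (Matrix.of fun _ _ : Fin 1 => x) := by
  have h : 1 + m' = m' + 1 := Nat.add_comm 1 m'
  have ax := hν.2.2.2.1 1 m' (Matrix.of fun _ _ : Fin 1 => x)
  have hc := nu_cast (ν := ν) h
    (MatDSum (Matrix.of fun _ _ : Fin 1 => x) (0 : Matrix (Fin m') (Fin m') E))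
  rw [ax] at hc
  rw [← hc]
  congr 1
  ext i j
  simp only [Matrix.reindex_apply, Matrix.submatrix_apply, MatDSum]
  have hval : ∀ w : Fin (m'+1), (((finCongr h).symm w : Fin (1+m')) : ℕ) = (w : ℕ) := by
    intro w; simp
  rw [finSumFin_symm_one, finSumFin_symm_one]
  simp only [hval]
  by_cases hi : (i:ℕ) = 0 <;> by_cases hj : (j:ℕ) = 0 <;>
    simp [hi, hj, Matrix.single_apply, Fin.ext_iff, @eq_comm _ (0:ℕ)]

lemma nu_std_eq_one (m' : ℕ) (s t : Fin (m'+1)) (x : E) :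
    ν (m'+1) (Matrix.single s t x) = ν 1 (Matrix.of fun _ _ : Fin 1 => x) := by
  rw [← nu_std00 hν m' x]
  exact le_antisymm (nu_std_le hν 0 0 s t x) (nu_std_le hν s t 0 0 x)

end GeneralNu2

def traceDualSet (m : ℕ) (u : Matrix (Fin m) (Fin m) ℂ) : Set ℝ :=
  {r | ∃ A : Matrix (Fin m) (Fin m) ℂ, opNorm A ≤ 1 ∧ r = ‖Matrix.trace (A * u)‖}

noncomputable def traceDual (m : ℕ) (u : Matrix (Fin m) (Fin m) ℂ) : ℝ :=
  sSup (traceDualSet m u)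

lemma trace_mul_eq {m : ℕ} (A B : Matrix (Fin m) (Fin m) ℂ) :
    (A * B).trace = ∑ i, ∑ j, A i j * B j i := by
  simp [Matrix.trace, Matrix.diag, Matrix.mul_apply]

lemma zero_mem_traceDualSet {m : ℕ} (u : Matrix (Fin m) (Fin m) ℂ) :
    (0:ℝ) ∈ traceDualSet m u :=
  ⟨0, by rw [opNorm_zero]; norm_num, by simp⟩

lemma traceDualSet_bddAbove {m : ℕ} (u : Matrix (Fin m) (Fin m) ℂ) :
    ∀ r ∈ traceDualSet m u, r ≤ ∑ i, ∑ j, ‖u i j‖ := by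
  rintro r ⟨A, hA, rfl⟩
  rw [trace_mul_eq]
  calc ‖∑ i, ∑ j, A i j * u j i‖ ≤ ∑ i, ∑ j, ‖A i j * u j i‖ := by
        refine le_trans (norm_sum_le _ _) (Finset.sum_le_sum fun i _ => norm_sum_le _ _)
    _ ≤ ∑ i, ∑ j, ‖u j i‖ := by
        refine Finset.sum_le_sum fun i _ => Finset.sum_le_sum fun j _ => ?_
        rw [norm_mul]
        calc ‖A i j‖ * ‖u j i‖ ≤ 1 * ‖u j i‖ :=
              mul_le_mul_of_nonneg_right (le_trans (entry_le_opNorm A i j) hA) (norm_nonneg _)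
          _ = ‖u j i‖ := one_mul _
    _ = ∑ i, ∑ j, ‖u i j‖ := Finset.sum_comm

lemma bddAbove_traceDualSet {m : ℕ} (u : Matrix (Fin m) (Fin m) ℂ) :
    BddAbove (traceDualSet m u) :=
  ⟨∑ i, ∑ j, ‖u i j‖, fun r hr => traceDualSet_bddAbove u r hr⟩

lemma le_traceDual {m : ℕ} {u A : Matrix (Fin m) (Fin m) ℂ} (hA : opNorm A ≤ 1) :
    ‖(A * u).trace‖ ≤ traceDual m u :=
  le_csSup (bddAbove_traceDualSet u) ⟨A, hA, rfl⟩

lemma traceDual_le {m : ℕ} {u : Matrix (Fin m) (Fin m) ℂ} {c : ℝ} (hc : 0 ≤ c)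
    (h : ∀ A : Matrix (Fin m) (Fin m) ℂ, opNorm A ≤ 1 → ‖(A * u).trace‖ ≤ c) :
    traceDual m u ≤ c :=
  Real.sSup_le (by rintro r ⟨A, hA, rfl⟩; exact h A hA) hc

lemma traceDual_nonneg {m : ℕ} (u : Matrix (Fin m) (Fin m) ℂ) : 0 ≤ traceDual m u :=
  le_csSup (bddAbove_traceDualSet u) (zero_mem_traceDualSet u)

lemma traceDual_zero {m : ℕ} : traceDual m (0 : Matrix (Fin m) (Fin m) ℂ) = 0 :=
  le_antisymm (traceDual_le le_rfl (by intro A _; simp)) (traceDual_nonneg 0)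

lemma traceDual_smul_le {m : ℕ} (c : ℂ) (u : Matrix (Fin m) (Fin m) ℂ) :
    traceDual m (c • u) ≤ ‖c‖ * traceDual m u := by
  apply traceDual_le (mul_nonneg (norm_nonneg c) (traceDual_nonneg u))
  intro A hA
  rw [Matrix.mul_smul, Matrix.trace_smul, norm_smul]
  exact mul_le_mul_of_nonneg_left (le_traceDual hA) (norm_nonneg c)

lemma traceDual_smul {m : ℕ} (c : ℂ) (u : Matrix (Fin m) (Fin m) ℂ) :
    traceDual m (c • u) = ‖c‖ * traceDual m u := by
  by_cases hc : c = 0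
  · simp [hc, traceDual_zero]
  refine le_antisymm (traceDual_smul_le c u) ?_
  have h2 : traceDual m u ≤ ‖c‖⁻¹ * traceDual m (c • u) := by
    have := traceDual_smul_le c⁻¹ (c • u)
    rw [smul_smul, inv_mul_cancel₀ hc, one_smul, norm_inv] at this
    exact this
  calc ‖c‖ * traceDual m u ≤ ‖c‖ * (‖c‖⁻¹ * traceDual m (c • u)) :=
        mul_le_mul_of_nonneg_left h2 (norm_nonneg c)
    _ = traceDual m (c • u) := by
        rw [← mul_assoc, mul_inv_cancel₀ (norm_ne_zero_iff.mpr hc), one_mul]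

lemma trace_std_mul {m : ℕ} (i j : Fin m) (u : Matrix (Fin m) (Fin m) ℂ) :
    (Matrix.single j i 1 * u).trace = u i j := by
  rw [trace_mul_eq]
  have step : ∀ k l : Fin m, Matrix.single j i (1:ℂ) k l * u l k
      = if k = j then (if l = i then u i j else 0) else 0 := by
    intro k l
    simp only [Matrix.single, Matrix.of_apply, @eq_comm _ j k, @eq_comm _ i l]
    by_cases h1 : k = j <;> by_cases h2 : l = i <;> simp [h1, h2]
  rw [Finset.sum_congr rfl fun k _ => Finset.sum_congr rfl fun l _ => step k l]
  simp

lemma traceDual_eq_zero {m : ℕ} {u : Matrix (Fin m) (Fin m) ℂ} (h : traceDual m u = 0) :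
    u = 0 := by
  by_contra hu
  have : ∃ i j, u i j ≠ 0 := by
    by_contra hc
    push_neg at hc
    exact hu (by ext i j; simpa using hc i j)
  obtain ⟨i, j, hij⟩ := this
  have h1 : ‖u i j‖ ≤ traceDual m u := by
    have := le_traceDual (u := u) (opNorm_std_le j i)
    rwa [trace_std_mul] at this
  rw [h] at h1
  exact hij (norm_le_zero_iff.mp h1)

lemma trace_submatrix_eq {l o : Type*} [Fintype l] [Fintype o] (f : l ≃ o)
    (M : Matrix o o ℂ) : (M.submatrix f f).trace = M.trace := by
  simp only [Matrix.trace, Matrix.diag, Matrix.submatrix_apply]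
  exact Equiv.sum_comp f fun i => M i i

lemma trace_fromBlocks' {l o : Type*} [Fintype l] [Fintype o]
    (A : Matrix l l ℂ) (B : Matrix l o ℂ) (C : Matrix o l ℂ) (D : Matrix o o ℂ) :
    (Matrix.fromBlocks A B C D).trace = A.trace + D.trace := by
  simp [Matrix.trace, Matrix.diag, Fintype.sum_sum_type, Matrix.fromBlocks]

lemma scalLeft_eq_mul {m : ℕ} (S u : Matrix (Fin m) (Fin m) ℂ) : scalLeft S u = S * u := by
  ext i j; simp [scalLeft, Matrix.mul_apply, smul_eq_mul]

lemma scalRight_eq_mul {m : ℕ} (u S : Matrix (Fin m) (Fin m) ℂ) : scalRight u S = u * S := by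
  ext i j; simp [scalRight, Matrix.mul_apply, smul_eq_mul, mul_comm]

lemma traceDual_dsum {m k : ℕ} (u : Matrix (Fin m) (Fin m) ℂ) :
    traceDual (m+k) (MatDSum u (0 : Matrix (Fin k) (Fin k) ℂ)) = traceDual m u := by
  set e := (finSumFinEquiv : Fin m ⊕ Fin k ≃ Fin (m+k)) with he
  apply le_antisymm
  · apply traceDual_le (traceDual_nonneg u)
    intro A hA
    set A' := Matrix.reindex e.symm e.symm A with hA'
    have hmul : A * MatDSum u 0
        = Matrix.reindex e e (A' * Matrix.fromBlocks u 0 0 (0 : Matrix (Fin k) (Fin k) ℂ)) := by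
      have hsub := Matrix.submatrix_mul_equiv A'
        (Matrix.fromBlocks u 0 0 (0 : Matrix (Fin k) (Fin k) ℂ)) ⇑e.symm e.symm ⇑e.symm
      unfold MatDSum
      simp only [Matrix.reindex_apply]
      rw [← hsub]
      congr 1
      simp [hA']
    rw [hmul, Matrix.reindex_apply, trace_submatrix_eq]
    rw [← Matrix.fromBlocks_toBlocks A', Matrix.fromBlocks_multiply]
    simp only [Matrix.mul_zero, Matrix.zero_mul, add_zero, zero_add]
    rw [trace_fromBlocks', Matrix.trace_zero, add_zero]
    apply le_traceDual
    have hblock : A'.toBlocks₁₁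
        = Matrix.of fun a b : Fin m => A (Fin.castAdd k a) (Fin.castAdd k b) := by
      ext a b
      simp [hA', Matrix.toBlocks₁₁, he]
    rw [hblock]
    exact le_trans (opNorm_compress A) hA
  · apply traceDual_le (traceDual_nonneg _)
    intro B hB
    set A := Matrix.reindex e e
      (Matrix.fromBlocks B 0 0 (0 : Matrix (Fin k) (Fin k) ℂ)) with hA
    have h1 : opNorm A ≤ 1 := le_trans (opNorm_extend B) hB
    have h2 : (A * MatDSum u 0).trace = (B * u).trace := by
      rw [hA]
      unfold MatDSum
      simp only [Matrix.reindex_apply]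
      rw [Matrix.submatrix_mul_equiv, trace_submatrix_eq, Matrix.fromBlocks_multiply]
      simp only [Matrix.mul_zero, Matrix.zero_mul, add_zero, zero_add]
      rw [trace_fromBlocks', Matrix.trace_zero, add_zero]
    calc ‖(B * u).trace‖ = ‖(A * MatDSum u 0).trace‖ := by rw [h2]
      _ ≤ traceDual (m+k) (MatDSum u 0) := le_traceDual h1

lemma traceDual_scalLeft {m : ℕ} (S u : Matrix (Fin m) (Fin m) ℂ) :
    traceDual m (scalLeft S u) ≤ opNorm S * traceDual m u := by
  rw [scalLeft_eq_mul]
  apply traceDual_le (mul_nonneg (opNorm_nonneg S) (traceDual_nonneg u))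
  intro A hA
  rw [show A * (S * u) = (A * S) * u from (Matrix.mul_assoc A S u).symm]
  by_cases hS : opNorm S = 0
  · rw [opNorm_eq_zero hS]
    simp [opNorm_zero]
  · have hpos : 0 < opNorm S := lt_of_le_of_ne (opNorm_nonneg S) (Ne.symm hS)
    set c : ℂ := ((opNorm S : ℝ) : ℂ)⁻¹ with hc
    have hnc : ‖c‖ = (opNorm S)⁻¹ := by
      rw [hc, norm_inv, Complex.norm_real, Real.norm_of_nonneg (opNorm_nonneg S)]
    have hA' : opNorm (c • (A * S)) ≤ 1 := by
      rw [opNorm_smul, hnc]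
      calc (opNorm S)⁻¹ * opNorm (A * S) ≤ (opNorm S)⁻¹ * (1 * opNorm S) := by
            apply mul_le_mul_of_nonneg_left _ (inv_nonneg.mpr (opNorm_nonneg S))
            exact le_trans (opNorm_mul_le A S)
              (mul_le_mul_of_nonneg_right hA (opNorm_nonneg S))
        _ = 1 := by rw [one_mul, inv_mul_cancel₀ hS]
    have key := le_traceDual (u := u) hA'
    rw [Matrix.smul_mul, Matrix.trace_smul, norm_smul, hnc] at key
    calc ‖((A * S) * u).trace‖
        = opNorm S * ((opNorm S)⁻¹ * ‖((A * S) * u).trace‖) := by field_simp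
      _ ≤ opNorm S * traceDual m u := mul_le_mul_of_nonneg_left key (opNorm_nonneg S)

lemma traceDual_scalRight {m : ℕ} (u S : Matrix (Fin m) (Fin m) ℂ) :
    traceDual m (scalRight u S) ≤ traceDual m u * opNorm S := by
  rw [scalRight_eq_mul]
  apply traceDual_le (mul_nonneg (traceDual_nonneg u) (opNorm_nonneg S))
  intro A hA
  have htr : (A * (u * S)).trace = ((S * A) * u).trace := by
    rw [← Matrix.mul_assoc, Matrix.trace_mul_comm, Matrix.mul_assoc]
  rw [htr]
  by_cases hS : opNorm S = 0
  · rw [opNorm_eq_zero hS]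
    simp [opNorm_zero]
  · have hpos : 0 < opNorm S := lt_of_le_of_ne (opNorm_nonneg S) (Ne.symm hS)
    set c : ℂ := ((opNorm S : ℝ) : ℂ)⁻¹ with hc
    have hnc : ‖c‖ = (opNorm S)⁻¹ := by
      rw [hc, norm_inv, Complex.norm_real, Real.norm_of_nonneg (opNorm_nonneg S)]
    have hA' : opNorm (c • (S * A)) ≤ 1 := by
      rw [opNorm_smul, hnc]
      calc (opNorm S)⁻¹ * opNorm (S * A) ≤ (opNorm S)⁻¹ * (opNorm S * 1) := by
            apply mul_le_mul_of_nonneg_left _ (inv_nonneg.mpr (opNorm_nonneg S))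
            exact le_trans (opNorm_mul_le S A)
              (mul_le_mul_of_nonneg_left hA (opNorm_nonneg S))
        _ = 1 := by rw [mul_one, inv_mul_cancel₀ hS]
    have key := le_traceDual (u := u) hA'
    rw [Matrix.smul_mul, Matrix.trace_smul, norm_smul, hnc] at key
    calc ‖((S * A) * u).trace‖
        = ((opNorm S)⁻¹ * ‖((S * A) * u).trace‖) * opNorm S := by field_simp
      _ ≤ traceDual m u * opNorm S := mul_le_mul_of_nonneg_right key (opNorm_nonneg S)

lemma isMatrixNorm_traceDual : IsMatrixNorm traceDual := by
  refine ⟨?_, ?_, ?_, ?_, ?_, ?_⟩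
  · intro m u v
    apply traceDual_le (add_nonneg (traceDual_nonneg u) (traceDual_nonneg v))
    intro A hA
    rw [Matrix.mul_add, Matrix.trace_add]
    exact le_trans (norm_add_le _ _) (add_le_add (le_traceDual hA) (le_traceDual hA))
  · exact fun m c u => traceDual_smul c u
  · exact fun m u => ⟨traceDual_eq_zero, fun h => by rw [h]; exact traceDual_zero⟩
  · exact fun m k u => traceDual_dsum u
  · exact fun m S u => traceDual_scalLeft S u
  · exact fun m u S => traceDual_scalRight u S

section HatBound
variable {E : Type} [AddCommGroup E] [Module ℂ E]
  {ν : ∀ m : ℕ, Matrix (Fin m) (Fin m) E → ℝ} (hν : IsMatrixNorm ν)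

include hν

lemma nu_matPhi_one {n : ℕ} (v : Matrix (Fin n) (Fin n) E) (hv : ν n v ≤ 1)
    (a : Matrix (Fin n) (Fin n) ℂ) :
    ν 1 (Matrix.of fun _ _ : Fin 1 => matPhi v a) ≤ ∑ i, ∑ j, ‖a j i‖ := by
  have hdec : (Matrix.of fun _ _ : Fin 1 => matPhi v a)
      = ∑ i, ∑ j, a j i • (Matrix.of fun _ _ : Fin 1 => v i j) := by
    ext p q
    simp [matPhi, Finset.sum_apply, Matrix.sum_apply]
  rw [hdec]
  refine le_trans (nu_sum_le hν 1 _ _) (Finset.sum_le_sum fun i _ => ?_)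
  refine le_trans (nu_sum_le hν 1 _ _) (Finset.sum_le_sum fun j _ => ?_)
  rw [hν.2.1]
  have h1 : ν 1 (Matrix.of fun _ _ : Fin 1 => v i j) ≤ 1 := by
    cases n with
    | zero => exact i.elim0
    | succ n' =>
      rw [← nu_std_eq_one hν n' i j (v i j)]
      have heq : Matrix.single i j (v i j)
          = scalLeft (Matrix.single i i 1)
              (scalRight v (Matrix.single j j 1)) := by
        rw [scalRight_std, scalLeft_std]
        ext p q
        simp only [Matrix.of_apply, Matrix.single, @eq_comm _ i p, @eq_comm _ j q]
        by_cases h1 : p = i <;> by_cases h2 : q = j <;> simp [h1, h2]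
      rw [heq]
      calc ν (n'+1) (scalLeft (Matrix.single i i 1)
              (scalRight v (Matrix.single j j 1)))
          ≤ opNorm (Matrix.single i i 1)
              * ν (n'+1) (scalRight v (Matrix.single j j 1)) := hν.2.2.2.2.1 _ _ _
        _ ≤ 1 * ν (n'+1) (scalRight v (Matrix.single j j 1)) :=
            mul_le_mul_of_nonneg_right (opNorm_std_le _ _) (nu_nonneg hν _ _)
        _ = ν (n'+1) (scalRight v (Matrix.single j j 1)) := one_mul _
        _ ≤ ν (n'+1) v * opNorm (Matrix.single j j 1) := hν.2.2.2.2.2 _ _ _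
        _ ≤ 1 * 1 := mul_le_mul hv (opNorm_std_le _ _) (opNorm_nonneg _) zero_le_one
        _ = 1 := one_mul 1
  calc ‖a j i‖ * ν 1 (Matrix.of fun _ _ : Fin 1 => v i j)
      ≤ ‖a j i‖ * 1 := mul_le_mul_of_nonneg_left h1 (norm_nonneg _)
    _ = ‖a j i‖ := mul_one _

lemma hat_bound {n m : ℕ} (v : Matrix (Fin n) (Fin n) E) (hv : ν n v ≤ 1)
    (u : Matrix (Fin m) (Fin m) (Matrix (Fin n) (Fin n) ℂ)) :
    ν m (matAmpl (matPhi v) u) ≤ ∑ s, ∑ t, ∑ i, ∑ j, ‖u s t j i‖ := by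
  cases m with
  | zero =>
    have h0 : matAmpl (matPhi v) u = 0 := by
      ext i j; exact i.elim0
    rw [h0, nu_zero hν]
    simp
  | succ m' =>
    have hdec : matAmpl (matPhi v) u
        = ∑ s, ∑ t, Matrix.single s t (matPhi v (u s t)) :=
      Matrix.matrix_eq_sum_single _
    rw [hdec]
    refine le_trans (nu_sum_le hν _ _ _) (Finset.sum_le_sum fun s _ => ?_)
    refine le_trans (nu_sum_le hν _ _ _) (Finset.sum_le_sum fun t _ => ?_)
    rw [nu_std_eq_one hν m' s t]
    exact nu_matPhi_one hν v hv (u s t)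

end HatBound

lemma matAmpl_reindex {E F : Type*} (φ : E → F) {a b : ℕ} (e : Fin a ≃ Fin b)
    (M : Matrix (Fin a) (Fin a) E) :
    matAmpl φ (Matrix.reindex e e M) = Matrix.reindex e e (matAmpl φ M) := rfl

lemma trace_matAmpl_MatDSum {E : Type*} [Zero E] (φ : E → ℂ) (hφ : φ 0 = 0) {m k : ℕ}
    (u : Matrix (Fin m) (Fin m) E) (w : Matrix (Fin k) (Fin k) E) :
    (matAmpl φ (MatDSum u w)).trace = (matAmpl φ u).trace + (matAmpl φ w).trace := by
  unfold MatDSum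
  simp only [Matrix.trace, Matrix.diag, Matrix.reindex_apply, Matrix.submatrix_apply,
    matAmpl, Matrix.of_apply]
  rw [Equiv.sum_comp (finSumFinEquiv : Fin m ⊕ Fin k ≃ Fin (m+k)).symm
    (fun z => φ ((Matrix.fromBlocks u 0 0 w) z z))]
  rw [Fintype.sum_sum_type]
  simp [Matrix.fromBlocks]

lemma trace_matAmpl_dSumFam {E : Type*} [Zero E] (φ : E → ℂ) (hφ : φ 0 = 0) :
    ∀ (k : ℕ) (d : Fin k → ℕ) (u : ∀ j, Matrix (Fin (d j)) (Fin (d j)) E),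
      (matAmpl φ (dSumFam k d u)).trace = ∑ j, (matAmpl φ (u j)).trace := by
  intro k
  induction k with
  | zero =>
    intro d u
    have h0 : matAmpl φ (dSumFam 0 d u) = Matrix.of fun i j => (0:ℂ) := by
      ext i j
      show φ ((dSumFam 0 d u) i j) = 0
      rw [show dSumFam 0 d u = 0 from rfl]
      simpa using hφ
    rw [h0]
    simp [Matrix.trace, Matrix.diag]
  | succ k ih =>
    intro d u
    show (matAmpl φ (Matrix.reindex (finCongr (Fin.sum_univ_succ d).symm)
      (finCongr (Fin.sum_univ_succ d).symm)
      (MatDSum (u 0) (dSumFam k (fun j => d j.succ) (fun j => u j.succ))))).trace = _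
    rw [matAmpl_reindex, Matrix.reindex_apply, trace_submatrix_eq,
      trace_matAmpl_MatDSum φ hφ, ih]
    rw [Fin.sum_univ_succ (f := fun j => (matAmpl φ (u j)).trace)]

lemma matPhi_std_one (n' : ℕ) :
    matPhi (Matrix.single (0 : Fin (n'+1)) 0 (1:ℂ))
      (Matrix.single (0 : Fin (n'+1)) 0 (1:ℂ)) = 1 := by
  unfold matPhi
  have step : ∀ i j : Fin (n'+1),
      Matrix.single (0 : Fin (n'+1)) 0 (1:ℂ) j i
        • Matrix.single (0 : Fin (n'+1)) 0 (1:ℂ) i j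
      = if i = 0 then (if j = 0 then 1 else 0) else 0 := by
    intro i j
    simp only [Matrix.single, Matrix.of_apply, smul_eq_mul]
    by_cases h1 : i = 0 <;> by_cases h2 : j = 0 <;>
      simp [h1, h2, @eq_comm _ (0 : Fin (n'+1))]
  rw [Finset.sum_congr rfl fun i _ => Finset.sum_congr rfl fun j _ => step i j]
  simp

lemma sum_norm_std_one (n' : ℕ) :
    (∑ i : Fin (n'+1), ∑ j : Fin (n'+1),
      ‖Matrix.single (0 : Fin (n'+1)) 0 (1:ℂ) j i‖) = 1 := by
  have step : ∀ i j : Fin (n'+1),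
      ‖Matrix.single (0 : Fin (n'+1)) 0 (1:ℂ) j i‖
      = if i = 0 then (if j = 0 then 1 else 0) else 0 := by
    intro i j
    simp only [Matrix.single, Matrix.of_apply]
    by_cases h1 : i = 0 <;> by_cases h2 : j = 0 <;>
      simp [h1, h2, @eq_comm _ (0 : Fin (n'+1))]
  rw [Finset.sum_congr rfl fun i _ => Finset.sum_congr rfl fun j _ => step i j]
  simp


/-- **Proposition 12.** For every `p > 1`, the matricially normed space `M̂_n` is not
`p`-convex (in particular, it is not an `L^p`-space): there are `k ∈ ℕ` and matrices
`u_1, …, u_k` with entries in `M̂_n` such that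
`‖u_1 ⊕ … ⊕ u_k‖ > (Σ_j ‖u_j‖^p)^{1/p}`. -/
theorem hatMn_not_pConvex (n : ℕ) (hn : 0 < n) (p : ℝ) (hp : 1 < p) :
    ∃ (k : ℕ) (d : Fin k → ℕ)
      (u : ∀ j, Matrix (Fin (d j)) (Fin (d j)) (Matrix (Fin n) (Fin n) ℂ)),
      (∑ j, hatNorm n (u j) ^ p) ^ (1 / p) < hatNorm n (dSumFam k d u) := by
  obtain ⟨n', rfl⟩ : ∃ n', n = n' + 1 := ⟨n - 1, by omega⟩
  set E11 : Matrix (Fin (n'+1)) (Fin (n'+1)) ℂ := Matrix.single 0 0 1 with hE11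
  set u1 : Matrix (Fin 1) (Fin 1) (Matrix (Fin (n'+1)) (Fin (n'+1)) ℂ) :=
    Matrix.of fun _ _ => E11 with hu1
  refine ⟨2, fun _ => 1, fun _ => u1, ?_⟩
  -- upper bound for each piece
  have hupper : hatNorm (n'+1) u1 ≤ 1 := by
    apply Real.sSup_le _ zero_le_one
    rintro r ⟨E, _, _, ν, hν, v, hv, rfl⟩
    refine le_trans (hat_bound hν v hv u1) ?_
    have : (∑ s : Fin 1, ∑ t : Fin 1, ∑ i, ∑ j, ‖u1 s t j i‖)
        = ∑ i, ∑ j, ‖E11 j i‖ := by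
      rw [Fin.sum_univ_one, Fin.sum_univ_one]; rfl
    rw [this, hE11, sum_norm_std_one]
  have hnonneg : 0 ≤ hatNorm (n'+1) u1 := by
    apply Real.sSup_nonneg
    rintro r ⟨E, _, _, ν, hν, v, hv, rfl⟩
    exact nu_nonneg hν _ _
  -- lower bound for the direct sum
  set D := dSumFam 2 (fun _ => 1) (fun _ => u1) with hD
  have hbdd : BddAbove (hatNormSet (n'+1) D) := by
    refine ⟨∑ s, ∑ t, ∑ i, ∑ j, ‖D s t j i‖, ?_⟩
    rintro r ⟨E, _, _, ν, hν, v, hv, rfl⟩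
    exact hat_bound hν v hv D
  have hv0 : traceDual (n'+1) E11 ≤ 1 := by
    apply traceDual_le zero_le_one
    intro A hA
    rw [Matrix.trace_mul_comm, hE11, trace_std_mul]
    exact le_trans (entry_le_opNorm A 0 0) hA
  have hmem : traceDual _ (matAmpl (matPhi E11) D) ∈ hatNormSet (n'+1) D :=
    ⟨ℂ, inferInstance, inferInstance, traceDual, isMatrixNorm_traceDual, E11, hv0, rfl⟩
  have htr : (matAmpl (matPhi E11) D).trace = 2 := by
    rw [hD, trace_matAmpl_dSumFam (matPhi E11) (by simp [matPhi]) 2 _ _]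
    have h1 : (matAmpl (matPhi E11) u1).trace = 1 := by
      rw [Matrix.trace_fin_one]
      show matPhi E11 (u1 0 0) = 1
      rw [hu1, hE11]
      exact matPhi_std_one n'
    rw [Fin.sum_univ_two, h1]
    norm_num
  have h2le : (2:ℝ) ≤ traceDual _ (matAmpl (matPhi E11) D) := by
    have h1el := le_traceDual (u := matAmpl (matPhi E11) D)
      (opNorm_one_le (m := ∑ j : Fin 2, (fun _ => 1) j))
    rw [Matrix.one_mul, htr] at h1el
    simpa using h1el
  have hlower : (2:ℝ) ≤ hatNorm (n'+1) D :=
    le_trans h2le (le_csSup hbdd hmem)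
  -- arithmetic
  have hp0 : (0:ℝ) < p := lt_trans one_pos hp
  have hsum : (∑ _j : Fin 2, hatNorm (n'+1) u1 ^ p) ≤ 2 := by
    rw [Fin.sum_univ_two]
    have h1 : hatNorm (n'+1) u1 ^ p ≤ 1 := Real.rpow_le_one hnonneg hupper (le_of_lt hp0)
    linarith
  have hLHS : (∑ _j : Fin 2, hatNorm (n'+1) u1 ^ p) ^ (1/p) ≤ (2:ℝ) ^ (1/p) := by
    apply Real.rpow_le_rpow _ hsum (by positivity)
    exact Finset.sum_nonneg fun _ _ => Real.rpow_nonneg hnonneg p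
  have hstrict : (2:ℝ) ^ (1/p) < 2 := by
    have : (2:ℝ) ^ (1/p) < 2 ^ (1:ℝ) := by
      apply Real.rpow_lt_rpow_of_exponent_lt one_lt_two
      rw [div_lt_one hp0]
      exact hp
    simpa using this
  calc (∑ _j : Fin 2, hatNorm (n'+1) u1 ^ p) ^ (1/p)
      ≤ (2:ℝ) ^ (1/p) := hLHS
    _ < 2 := hstrict
    _ ≤ hatNorm (n'+1) D := hlower
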